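/- Let (X,b) be a locally finite weighted graph, F = (F_x)_{x∈X} a family of finite-dimensional complex inner product spaces, Φ a unitary connection on F with Φ_{yx} = Φ_{xy}^{-1}, and W a family of self-adjoint maps W(x) : F_x → F_x with smallest eigenvalue W_min(x). Let M be the associated magnetic Schrödinger operator and L_{W_min} the scalar Schrödinger operator with potential W_min. Then for every finitely supported vector field φ ∈ Γ_c(X;F) one has (φ, Mφ) ≥ q_{W_min}(|φ|), where (φ,ψ) = ∑_{x∈X} ⟨φ(x),ψ(x)⟩_x and |φ|(x) = ‖φ(x)‖_x. -/

import Mathlib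

/-- The quadratic form `q_V(f) = (1/2)∑_{x,y} b(x,y)|f x - f y|² + ∑_x V(x)|f x|²`
associated with a weighted graph `b` and a potential `V`. -/
noncomputable def qForm {X : Type*} (b : X → X → ℝ) (V : X → ℝ) (f : X → ℂ) : ℝ :=
  (1 / 2) * ∑' x, ∑' y, b x y * ‖f x - f y‖ ^ 2 + ∑' x, V x * ‖f x‖ ^ 2

/-- A symmetric operator on a finite-dimensional complex inner product space whose
eigenvalues are all `≥ c` has quadratic form bounded below by `c‖v‖²`. -/
lemma quad_lower_bound {E : Type*} [NormedAddCommGroup E] [InnerProductSpace ℂ E]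
    [FiniteDimensional ℂ E] (T : E →ₗ[ℂ] E)
    (hT : ∀ u v : E, (inner ℂ (T u) v : ℂ) = inner ℂ u (T v)) (c : ℝ)
    (hc : ∀ μ : ℝ, (∃ v : E, v ≠ 0 ∧ T v = (μ : ℂ) • v) → c ≤ μ) (v : E) :
    c * ‖v‖ ^ 2 ≤ (inner ℂ v (T v) : ℂ).re := by
  have hsym : T.IsSymmetric := hT
  have hn : Module.finrank ℂ E = Module.finrank ℂ E := rfl
  set e := hsym.eigenvectorBasis hn with he
  set μ := hsym.eigenvalues hn with hμ
  have happ : ∀ i, T (e i) = (μ i : ℂ) • e i := fun i => hsym.apply_eigenvectorBasis hn i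
  have hge : ∀ i, c ≤ μ i := fun i =>
    hc (μ i) ⟨e i, (hsym.hasEigenvector_eigenvectorBasis hn i).2, happ i⟩
  have key : (inner ℂ v (T v) : ℂ) = ∑ i, (μ i : ℂ) * (inner ℂ v (e i) * inner ℂ (e i) v) := by
    rw [← OrthonormalBasis.sum_inner_mul_inner e v (T v)]
    refine Finset.sum_congr rfl fun i _ => ?_
    have h1 : (inner ℂ (e i) (T v) : ℂ) = (μ i : ℂ) * inner ℂ (e i) v := by
      rw [← hT (e i) v, happ i, inner_smul_left, Complex.conj_ofReal]
    rw [h1]; ring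
  have hsq : ∀ i, (inner ℂ v (e i) * inner ℂ (e i) v : ℂ) =
      ((‖(inner ℂ (e i) v : ℂ)‖ ^ 2 : ℝ) : ℂ) := by
    intro i
    have h1 : (inner ℂ v (e i) : ℂ) = starRingEnd ℂ (inner ℂ (e i) v) := by
      rw [inner_conj_symm]
    rw [h1, mul_comm, Complex.mul_conj, Complex.normSq_eq_norm_sq]
  have hre : (inner ℂ v (T v) : ℂ).re = ∑ i, μ i * ‖(inner ℂ (e i) v : ℂ)‖ ^ 2 := by
    rw [key]
    rw [Complex.re_sum]
    refine Finset.sum_congr rfl fun i _ => ?_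
    rw [hsq i, ← Complex.ofReal_mul, Complex.ofReal_re]
  have hnorm : ‖v‖ ^ 2 = ∑ i, ‖(inner ℂ (e i) v : ℂ)‖ ^ 2 := by
    have h2 : (inner ℂ v v : ℂ) = ∑ i, inner ℂ v (e i) * inner ℂ (e i) v :=
      (OrthonormalBasis.sum_inner_mul_inner e v v).symm
    have h3 := congrArg Complex.re h2
    have h4 : (inner ℂ v v : ℂ).re = ‖v‖ ^ 2 := by
      simpa using inner_self_eq_norm_sq (𝕜 := ℂ) v
    rw [h4, Complex.re_sum] at h3
    rw [h3]
    refine Finset.sum_congr rfl fun i _ => ?_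
    rw [hsq i, Complex.ofReal_re]
  rw [hre, hnorm, Finset.mul_sum]
  exact Finset.sum_le_sum fun i _ =>
    mul_le_mul_of_nonneg_right (hge i) (by positivity)

/-- **Domination (Kato's inequality plus Green's formula).**
Let `(X,b)` be a locally finite weighted graph, `F` a Hermitian vector bundle with
finite-dimensional fibers, `Φ` a unitary connection with `Φ_{yx} = Φ_{xy}⁻¹`, and `W` a
self-adjoint bundle endomorphism whose smallest eigenvalue on the fiber over `x` is
`W_min x`.  Then for every finitely supported vector field `φ` we have
`(φ, Mφ) ≥ q_{W_min}(|φ|)`, where `M` is the magnetic Schrödinger operator,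
`(φ,ψ) = ∑_x ⟨φ x, ψ x⟩` and `|φ| x = ‖φ x‖`. -/
theorem magnetic_schroedinger_domination
    {X : Type*} [Countable X]
    (b : X → X → ℝ)
    (hb0 : ∀ x, b x x = 0)
    (hbnn : ∀ x y, 0 ≤ b x y)
    (hsym : ∀ x y, b x y = b y x)
    (hlf : ∀ x, {y | b x y ≠ 0}.Finite)
    (F : X → Type*) [∀ x, NormedAddCommGroup (F x)] [∀ x, InnerProductSpace ℂ (F x)]
    [∀ x, FiniteDimensional ℂ (F x)]
    (Φ : ∀ x y : X, F y ≃ₗᵢ[ℂ] F x)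
    (hΦ : ∀ x y : X, (Φ x y).symm = Φ y x)
    (W : ∀ x, F x →ₗ[ℂ] F x)
    (hW : ∀ x, ∀ u v : F x, (inner ℂ (W x u) v : ℂ) = inner ℂ u (W x v))
    (Wmin : X → ℝ)
    (hWmin : ∀ x, (∃ v : F x, v ≠ 0 ∧ W x v = (Wmin x : ℂ) • v) ∧
      ∀ μ : ℝ, (∃ v : F x, v ≠ 0 ∧ W x v = (μ : ℂ) • v) → Wmin x ≤ μ)
    (φ : ∀ x, F x) (hφ : {x | φ x ≠ 0}.Finite) :
    qForm b Wmin (fun x => (‖φ x‖ : ℂ)) ≤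
      ∑ᶠ x, (inner ℂ (φ x) ((∑ᶠ y, b x y • (φ x - Φ x y (φ y))) + W x (φ x)) : ℂ).re := by
  classical
  set K : Finset X := hφ.toFinset with hKdef
  have hKmem : ∀ x : X, x ∈ K ↔ φ x ≠ 0 := fun x => hφ.mem_toFinset
  set N : Finset X := K ∪ K.biUnion (fun x => (hlf x).toFinset) with hNdef
  have hKN : K ⊆ N := Finset.subset_union_left
  have hφK : ∀ x, x ∉ K → φ x = 0 := fun x hx => by
    by_contra h; exact hx ((hKmem x).2 h)
  have hφN : ∀ x, x ∉ N → φ x = 0 := fun x hx => hφK x (fun h => hx (hKN h))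
  have hnbrN : ∀ x ∈ K, ∀ y, b x y ≠ 0 → y ∈ N := by
    intro x hx y hy
    exact Finset.mem_union_right _
      (Finset.mem_biUnion.2 ⟨x, hx, (hlf x).mem_toFinset.2 hy⟩)
  have hnbrN' : ∀ y ∈ K, ∀ x, b x y ≠ 0 → x ∈ N := by
    intro y hy x hxy
    exact hnbrN y hy x (by rw [hsym]; exact hxy)
  -- Kato bound
  have hkato : ∀ x y, (inner ℂ (φ x) (Φ x y (φ y)) : ℂ).re ≤ ‖φ x‖ * ‖φ y‖ := by
    intro x y
    calc (inner ℂ (φ x) (Φ x y (φ y)) : ℂ).re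
        ≤ ‖(inner ℂ (φ x) (Φ x y (φ y)) : ℂ)‖ := Complex.re_le_norm _
      _ ≤ ‖φ x‖ * ‖Φ x y (φ y)‖ := norm_inner_le_norm _ _
      _ = ‖φ x‖ * ‖φ y‖ := by rw [(Φ x y).norm_map]
  -- RHS rewrite
  set G : X → X → ℝ := fun x y => b x y * (inner ℂ (φ x) (φ x - Φ x y (φ y)) : ℂ).re with hGdef
  have hRHS : ∑ᶠ x, (inner ℂ (φ x) ((∑ᶠ y, b x y • (φ x - Φ x y (φ y))) + W x (φ x)) : ℂ).re
      = ∑ x ∈ N, ((∑ y ∈ N, G x y) + (inner ℂ (φ x) (W x (φ x)) : ℂ).re) := by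
    rw [finsum_eq_sum_of_support_subset _ (s := N) ?hsupp]
    case hsupp =>
      intro x hx
      simp only [Function.mem_support, ne_eq] at hx
      by_contra hxN
      rw [hφN x hxN] at hx
      simp at hx
    refine Finset.sum_congr rfl fun x hx => ?_
    by_cases hxK : x ∈ K
    · have hfin : ∑ᶠ y, b x y • (φ x - Φ x y (φ y)) =
          ∑ y ∈ N, b x y • (φ x - Φ x y (φ y)) := by
        refine finsum_eq_sum_of_support_subset _ (s := N) ?_
        intro y hy
        simp only [Function.mem_support, ne_eq] at hy
        by_contra hyN
        by_cases hbxy : b x y = 0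
        · rw [hbxy] at hy; simp at hy
        · exact hyN (hnbrN x hxK y hbxy)
      rw [hfin, inner_add_right, inner_sum, Complex.add_re, Complex.re_sum]
      congr 1
      refine Finset.sum_congr rfl fun y _ => ?_
      have : (b x y : ℝ) • (φ x - Φ x y (φ y)) = ((b x y : ℝ) : ℂ) • (φ x - Φ x y (φ y)) := by
        rw [Complex.coe_smul]
      rw [this, inner_smul_right, Complex.re_ofReal_mul]
    · have h0 : φ x = 0 := hφK x hxK
      simp [h0, hGdef]
  -- helper : real part of inner self
  have hselfre : ∀ (x : X) (v : F x), (inner ℂ v v : ℂ).re = ‖v‖ ^ 2 := by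
    intro x v
    simpa using inner_self_eq_norm_sq (𝕜 := ℂ) v
  -- LHS rewrite
  set f : X → ℂ := fun x => (‖φ x‖ : ℂ) with hfdef
  have hf0 : ∀ x, φ x = 0 → f x = 0 := by
    intro x hx; simp [hfdef, hx]
  have hinnerT : ∀ x, ∑' y, b x y * ‖f x - f y‖ ^ 2 = ∑ y ∈ N, b x y * ‖f x - f y‖ ^ 2 := by
    intro x
    refine tsum_eq_sum fun y hy => ?_
    by_cases hbxy : b x y = 0
    · rw [hbxy]; ring
    · have hxK : x ∉ K := fun h => hy (hnbrN x h y hbxy)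
      have hyK : y ∉ K := fun h => hy (hKN h)
      rw [hf0 x (hφK x hxK), hf0 y (hφK y hyK)]
      simp
  have houter : ∑' x, ∑' y, b x y * ‖f x - f y‖ ^ 2
      = ∑ x ∈ N, ∑ y ∈ N, b x y * ‖f x - f y‖ ^ 2 := by
    rw [tsum_congr hinnerT]
    refine tsum_eq_sum fun x hx => Finset.sum_eq_zero fun y _ => ?_
    by_cases hbxy : b x y = 0
    · rw [hbxy]; ring
    · have hxK : x ∉ K := fun h => hx (hKN h)
      have hyK : y ∉ K := fun h => hx (hnbrN' y h x hbxy)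
      rw [hf0 x (hφK x hxK), hf0 y (hφK y hyK)]
      simp
  have hWsum : ∑' x, Wmin x * ‖f x‖ ^ 2 = ∑ x ∈ N, Wmin x * ‖f x‖ ^ 2 := by
    refine tsum_eq_sum fun x hx => ?_
    rw [hf0 x (hφN x hx)]
    simp
  rw [hRHS]
  show (1 / 2) * (∑' x, ∑' y, b x y * ‖f x - f y‖ ^ 2) + (∑' x, Wmin x * ‖f x‖ ^ 2) ≤ _
  rw [houter, hWsum, Finset.sum_add_distrib]
  -- W part
  have hWpart : ∀ x, Wmin x * ‖f x‖ ^ 2 ≤ (inner ℂ (φ x) (W x (φ x)) : ℂ).re := by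
    intro x
    have hfx : ‖f x‖ = ‖φ x‖ := by simp [hfdef]
    rw [hfx]
    exact quad_lower_bound (W x) (hW x) (Wmin x) (hWmin x).2 (φ x)
  have hWs : ∑ x ∈ N, Wmin x * ‖f x‖ ^ 2 ≤ ∑ x ∈ N, (inner ℂ (φ x) (W x (φ x)) : ℂ).re :=
    Finset.sum_le_sum fun x _ => hWpart x
  -- graph part
  have hAG : ∀ x y, b x y * ‖f x - f y‖ ^ 2 ≤ G x y + G y x := by
    intro x y
    have hfxy : ‖f x - f y‖ ^ 2 = (‖φ x‖ - ‖φ y‖) ^ 2 := by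
      rw [hfdef]
      rw [show ((‖φ x‖ : ℂ) - (‖φ y‖ : ℂ)) = ((‖φ x‖ - ‖φ y‖ : ℝ) : ℂ) by push_cast; ring]
      rw [Complex.norm_real, Real.norm_eq_abs, sq_abs]
    have hG1 : G x y = b x y * (‖φ x‖ ^ 2 - (inner ℂ (φ x) (Φ x y (φ y)) : ℂ).re) := by
      rw [hGdef]
      simp only [inner_sub_right, Complex.sub_re, hselfre]
    have hG2 : G y x = b x y * (‖φ y‖ ^ 2 - (inner ℂ (φ y) (Φ y x (φ x)) : ℂ).re) := by
      rw [hGdef]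
      simp only [inner_sub_right, Complex.sub_re, hselfre, hsym y x]
    have k1 := hkato x y
    have k2 := hkato y x
    have hb := hbnn x y
    rw [hfxy, hG1, hG2]
    nlinarith [mul_le_mul_of_nonneg_left (add_le_add k1 k2) hb]
  have hswap : ∑ x ∈ N, ∑ y ∈ N, G y x = ∑ x ∈ N, ∑ y ∈ N, G x y := Finset.sum_comm
  have hdouble : ∑ x ∈ N, ∑ y ∈ N, b x y * ‖f x - f y‖ ^ 2
      ≤ 2 * ∑ x ∈ N, ∑ y ∈ N, G x y := by
    calc ∑ x ∈ N, ∑ y ∈ N, b x y * ‖f x - f y‖ ^ 2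
        ≤ ∑ x ∈ N, ∑ y ∈ N, (G x y + G y x) :=
          Finset.sum_le_sum fun x _ => Finset.sum_le_sum fun y _ => hAG x y
      _ = (∑ x ∈ N, ∑ y ∈ N, G x y) + ∑ x ∈ N, ∑ y ∈ N, G y x := by
          simp [Finset.sum_add_distrib]
      _ = 2 * ∑ x ∈ N, ∑ y ∈ N, G x y := by rw [hswap]; ring
  linarith
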